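/- If a sorting word encoding a sorting process of a permutation σ satisfies property (P_i), then at time t_i the elements currently in the stacks are exactly those of σ^{(i)}. -/

import Mathlib

/-- The three stack operations: `ρ` (push the next input element onto `H`),
`λ` (move the top of `H` onto the top of `V`), `μ` (pop the top of `V` to the output). -/
inductive Op : Type
  | push : Op
  | lam : Op
  | mu : Op
  deriving DecidableEq

/-- A full machine configuration: remaining input, stack `H`, stack `V`
(both stacks have their top at the head of the list), and the output so far. -/
structure Conf : Type where
  input : List ℤ
  H : List ℤ
  V : List ℤ
  output : List ℤ
  deriving DecidableEq

/-- One machine step (`none` if the operation is impossible). -/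
def stepOp : Op → Conf → Option Conf
  | Op.push, ⟨x :: inp, h, v, out⟩ => some ⟨inp, x :: h, v, out⟩
  | Op.lam, ⟨inp, x :: h, v, out⟩ => some ⟨inp, h, x :: v, out⟩
  | Op.mu, ⟨inp, h, x :: v, out⟩ => some ⟨inp, h, v, out ++ [x]⟩
  | _, _ => none

/-- Run a word of operations from a configuration. -/
def runOps : List Op → Conf → Option Conf
  | [], c => some c
  | o :: w, c => (stepOp o c).bind (runOps w)

/-- Initial configuration with input `σ`, empty stacks and empty output. -/
def initConf (σ : List ℤ) : Conf := ⟨σ, [], [], []⟩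

/-- Number of occurrences of the letter `o` in the word `w`. -/
def countOp (w : List Op) (o : Op) : ℕ := (w.filter (fun o' => decide (o' = o))).length

/-- A stack word: every prefix `v` satisfies `|v|_ρ ≥ |v|_λ ≥ |v|_μ`. -/
def IsStackWord (w : List Op) : Prop :=
  ∀ v : List Op, v <+: w →
    countOp v Op.mu ≤ countOp v Op.lam ∧ countOp v Op.lam ≤ countOp v Op.push

/-- A sorting word: a stack word with `|w|_ρ = |w|_λ = |w|_μ`. -/
def IsSortingWord (w : List Op) : Prop :=
  IsStackWord w ∧ countOp w Op.push = countOp w Op.lam ∧ countOp w Op.lam = countOp w Op.mu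

/-- `w` is a sorting word for `σ`: applied to input `σ` it empties everything
and outputs the elements of `σ` in increasing order. -/
def SortsTo (σ : List ℤ) (w : List Op) : Prop :=
  ∃ out : List ℤ, runOps w (initConf σ) = some ⟨[], [], [], out⟩ ∧
    out.Pairwise (· < ·) ∧ out.Perm σ

/-- `σ` is 2-stack sortable. -/
def Sortable (σ : List ℤ) : Prop := ∃ w : List Op, SortsTo σ w

/-- A stack configuration `(V, H)`; each list has the top of the stack at its head
(so the bottom-to-top reading is the reverse of the list). -/
structure SConf : Type where
  V : List ℤ
  H : List ℤ
  deriving DecidableEq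

/-- The elements of a stack configuration. -/
def SConf.elems (c : SConf) : List ℤ := c.V ++ c.H

/-- A stack configuration is poppable if its elements can all be output in
increasing order using only operations `λ` and `μ`. -/
def Poppable (c : SConf) : Prop :=
  ∃ (w : List Op) (out : List ℤ), Op.push ∉ w ∧
    runOps w ⟨[], c.H, c.V, []⟩ = some ⟨[], [], [], out⟩ ∧ out.Pairwise (· < ·)

/-- `c` is the stack configuration reached after performing `w` with input `σ`
(i.e. `c = c_σ(w)`). -/
def ReachesConf (σ : List ℤ) (w : List Op) (c : SConf) : Prop :=
  ∃ inp out : List ℤ, runOps w (initConf σ) = some ⟨inp, c.H, c.V, out⟩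

/-- A stack configuration is reachable for `σ` if it equals `c_σ(w)` for some stack word `w`. -/
def Reachable (σ : List ℤ) (c : SConf) : Prop :=
  ∃ w : List Op, IsStackWord w ∧ ReachesConf σ w c

/-- A total stack configuration of `σ`: its elements are exactly those of `σ`. -/
def TotalFor (σ : List ℤ) (c : SConf) : Prop := c.elems.Perm σ

/-- A pushall stack configuration of `σ`: poppable, total and reachable for `σ`. -/
def IsPushall (σ : List ℤ) (c : SConf) : Prop :=
  Poppable c ∧ TotalFor σ c ∧ Reachable σ c

/-- The decorated word of `w` started from a configuration: each letter is labelled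
with the element it acts on. -/
def decorate : List Op → Conf → Option (List (Op × ℤ))
  | [], _ => some []
  | Op.push :: w, ⟨x :: inp, h, v, out⟩ =>
      (decorate w ⟨inp, x :: h, v, out⟩).map (fun l => (Op.push, x) :: l)
  | Op.lam :: w, ⟨inp, x :: h, v, out⟩ =>
      (decorate w ⟨inp, h, x :: v, out⟩).map (fun l => (Op.lam, x) :: l)
  | Op.mu :: w, ⟨inp, h, x :: v, out⟩ =>
      (decorate w ⟨inp, h, v, out ++ [x]⟩).map (fun l => (Op.mu, x) :: l)
  | _ :: _, _ => none

/-- The restriction `w_{|I}` of a decorated word: keep exactly the letters acting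
on elements of `I`, then forget the labels. -/
def restrictWord (dw : List (Op × ℤ)) (I : Finset ℤ) : List Op :=
  (dw.filter (fun p => decide (p.2 ∈ I))).map Prod.fst

/-- `Bs` is a decomposition of `τ` into (nonempty, contiguous) blocks whose values
decrease from one block to the next. -/
def IsDecBlocks (τ : List ℤ) (Bs : List (List ℤ)) : Prop :=
  τ = Bs.flatten ∧ (∀ B ∈ Bs, B ≠ []) ∧
    Bs.Pairwise (fun B B' => ∀ x ∈ B, ∀ y ∈ B', y < x)

/-- `τ` is `⊖`-indecomposable. -/
def MinusIndecomposable (τ : List ℤ) : Prop :=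
  τ ≠ [] ∧ ∀ Bs : List (List ℤ), IsDecBlocks τ Bs → Bs.length ≤ 1

/-- `Bs` is the `⊖`-decomposition of `τ`: a decomposition into decreasing blocks,
each of which is `⊖`-indecomposable. -/
def IsMinusDecomposition (τ : List ℤ) (Bs : List (List ℤ)) : Prop :=
  IsDecBlocks τ Bs ∧ ∀ B ∈ Bs, MinusIndecomposable B

/-- `k` (0-based) is the position of a right-to-left minimum of `σ`:
no later entry is smaller. -/
def IsRTLMinPos (σ : List ℤ) (k : ℕ) : Prop :=
  k < σ.length ∧ ∀ j, j < σ.length → k < j → ¬ (σ.getD j 0 < σ.getD k 0)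

instance (σ : List ℤ) : DecidablePred (IsRTLMinPos σ) := fun k => by
  unfold IsRTLMinPos; infer_instance

/-- The (increasing) list of positions of the right-to-left minima of `σ`. -/
def rtlPositions (σ : List ℤ) : List ℕ :=
  (List.range σ.length).filter (fun k => decide (IsRTLMinPos σ k))

/-- The number `r` of right-to-left minima of `σ`. -/
def rtlCount (σ : List ℤ) : ℕ := (rtlPositions σ).length

/-- The 0-based position `k_i` of the `i`-th right-to-left minimum of `σ` (`i` is 1-based). -/
def rtlPos (σ : List ℤ) (i : ℕ) : ℕ := (rtlPositions σ).getD (i - 1) 0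

/-- `σ^{(i)}`: the elements `σ_j` with `j < k_i` and `σ_j > σ_{k_i}`, in the order of `σ`. -/
def sigmaUp (σ : List ℤ) (i : ℕ) : List ℤ :=
  (σ.take (rtlPos σ i)).filter (fun x => decide (σ.getD (rtlPos σ i) 0 < x))

/-- `A^{(i)}`: the elements `σ_j` with `j < k_i` and `σ_j > σ_{k_{i+1}}`, in the order of `σ`. -/
def commonA (σ : List ℤ) (i : ℕ) : List ℤ :=
  (σ.take (rtlPos σ i)).filter (fun x => decide (σ.getD (rtlPos σ (i + 1)) 0 < x))

/-- The letter `u` occurs (strictly) before the letter `v` in the decorated word `dw`. -/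
def Before (dw : List (Op × ℤ)) (u v : Op × ℤ) : Prop :=
  ∃ d1 d2 d3 : List (Op × ℤ), dw = d1 ++ u :: d2 ++ v :: d3

/-- The decorated word `dw` (of a sorting word of `σ`) satisfies property `(P_i)`
(`i` is 1-based). -/
def SatisfiesP (σ : List ℤ) (dw : List (Op × ℤ)) (i : ℕ) : Prop :=
  (∃ d1 d2 : List (Op × ℤ),
      dw = d1 ++ (Op.push, σ.getD (rtlPos σ i) 0) :: (Op.lam, σ.getD (rtlPos σ i) 0)
        :: (Op.mu, σ.getD (rtlPos σ i) 0) :: d2) ∧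
  (∀ x ∈ σ, x < σ.getD (rtlPos σ i) 0 →
      Before dw (Op.mu, x) (Op.push, σ.getD (rtlPos σ i) 0)) ∧
  (i < rtlCount σ →
    ∀ (Bs : List (List ℤ)) (p : ℕ) (m : ℤ),
      IsMinusDecomposition (sigmaUp σ i) Bs →
      m ∈ commonA σ i → (∀ y ∈ commonA σ i, m ≤ y) →
      p < Bs.length → m ∈ Bs.getD p [] →
      ∀ (x : ℤ) (j : ℕ), p < j → j < Bs.length → x ∈ Bs.getD j [] →
        Before dw (Op.mu, x) (Op.push, σ.getD (rtlPos σ i + 1) 0))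

/-- An extended stack configuration `(c, i)` of `σ`: here `i` is the number of input
elements already consumed (the paper's index minus one), `c` is poppable and consists
of all elements among the first `i` ones that are greater than some value `p`. -/
def IsExtConf (σ : List ℤ) (c : SConf) (i : ℕ) : Prop :=
  i ≤ σ.length ∧ Poppable c ∧ c.elems.Nodup ∧
    ∃ p : ℤ, ∀ x : ℤ, x ∈ c.elems ↔ (x ∈ σ.take i ∧ p < x)

/-- `(c', j)` is accessible from `(c, i)` for `σ`: starting from stacks `c` with input
`σ_{i+1} … σ_n` remaining, some sequence of operations reaches stacks `c'` with input
`σ_{j+1} … σ_n` remaining, the `μ` operations outputting elements in increasing order. -/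
def AccessibleFrom (σ : List ℤ) (c : SConf) (i : ℕ) (c' : SConf) (j : ℕ) : Prop :=
  ∃ (w : List Op) (out : List ℤ),
    runOps w ⟨σ.drop i, c.H, c.V, []⟩ = some ⟨σ.drop j, c'.H, c'.V, out⟩ ∧
    out.Pairwise (· < ·)

/-- A `P_i`-stack configuration of `σ`: a configuration `c_{σ_{≤k_i}}(w)` such that for
some word `u` whose first letter is the push of `σ_{k_i}`, `w ++ u` is a sorting word of
`σ_{≤k_i}` satisfying `(P_ℓ)` for all `ℓ` from 1 to `i`. -/
def PiConfig (σ : List ℤ) (i : ℕ) (c : SConf) : Prop :=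
  ∃ (w u : List Op) (dw : List (Op × ℤ)),
    u.head? = some Op.push ∧
    countOp w Op.push = rtlPos σ i ∧
    ReachesConf (σ.take (rtlPos σ i + 1)) w c ∧
    SortsTo (σ.take (rtlPos σ i + 1)) (w ++ u) ∧
    decorate (w ++ u) (initConf (σ.take (rtlPos σ i + 1))) = some dw ∧
    ∀ l, 1 ≤ l → l ≤ i → SatisfiesP (σ.take (rtlPos σ i + 1)) dw l

/-- The restriction `c_{|I}` of a stack configuration to the elements of `I`. -/
def restrictConf (c : SConf) (I : List ℤ) : SConf :=
  ⟨c.V.filter (fun x => decide (x ∈ I)), c.H.filter (fun x => decide (x ∈ I))⟩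

/-- The restriction `σ_{|I}` of a list to the elements of `I`. -/
def restrictList (τ I : List ℤ) : List ℤ := τ.filter (fun x => decide (x ∈ I))

/-- Stack `H` (top at head, i.e. bottom-to-top is the reverse) contains the pattern `132`. -/
def HasPattern132 (H : List ℤ) : Prop :=
  ∃ x y z : ℤ, List.Sublist [x, y, z] H.reverse ∧ x < z ∧ z < y

/-- Stack `V` contains the pattern `12` (bottom to top). -/
def HasPattern12 (V : List ℤ) : Prop :=
  ∃ x y : ℤ, List.Sublist [x, y] V.reverse ∧ x < y

/-- The stacks `(V,H)` contain the pattern `|2|13|`: an element `i` of `V` and elements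
`j, k` of `H`, with `j` below `k` in `H`, such that `j < i < k`. -/
def HasPattern2_13 (c : SConf) : Prop :=
  ∃ i ∈ c.V, ∃ j k : ℤ, List.Sublist [j, k] c.H.reverse ∧ j < i ∧ i < k

/-- `y` occurs (strictly) above `x` in the stack `L` (top of stack at the head). -/
def AboveIn (L : List ℤ) (y x : ℤ) : Prop :=
  ∃ (a b : ℕ) (ha : a < L.length) (hb : b < L.length),
    a < b ∧ L.get ⟨a, ha⟩ = y ∧ L.get ⟨b, hb⟩ = x

/-- The increasing list of integers `i, i+1, …, j`. -/
def intRange (i j : ℤ) : List ℤ := (List.range (j + 1 - i).toNat).map (fun t => i + t)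

/-- The decreasing permutation `n (n-1) … 2 1`. -/
def decPerm (n : ℕ) : List ℤ := (List.range n).map (fun t => (n - t : ℤ))

/-- Labels of the `μ` letters of a decorated word, in order. -/
def muLabels (dw : List (Op × ℤ)) : List ℤ :=
  dw.filterMap (fun p => if p.1 = Op.mu then some p.2 else none)

/-- Labels of the `ρ` letters of a decorated word, in order. -/
def pushLabels (dw : List (Op × ℤ)) : List ℤ :=
  dw.filterMap (fun p => if p.1 = Op.push then some p.2 else none)

theorem runOps_append (a b : List Op) (c : Conf) :
    runOps (a ++ b) c = (runOps a c).bind (runOps b) := by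
  induction a generalizing c with
  | nil => simp [runOps]
  | cons o a ih =>
    simp only [List.cons_append, runOps]
    cases stepOp o c with
    | none => simp
    | some c' => simp [ih]

theorem decorate_spec (w : List Op) : ∀ (c : Conf) (dw : List (Op × ℤ)),
    decorate w c = some dw →
    ∃ c', runOps w c = some c' ∧
      c'.output = c.output ++ muLabels dw ∧
      pushLabels dw = c.input.take (countOp w Op.push) ∧
      c'.input = c.input.drop (countOp w Op.push) ∧
      (↑c'.H + ↑c'.V + ↑c'.output + ↑c'.input : Multiset ℤ) =
        ↑c.H + ↑c.V + ↑c.output + ↑c.input := by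
  induction w with
  | nil =>
    intro c dw h
    simp [decorate] at h
    subst h
    exact ⟨c, rfl, by simp [muLabels], by simp [pushLabels, countOp], by simp [countOp], rfl⟩
  | cons o w ih =>
    intro c dw h
    match o, c with
    | Op.push, ⟨[], hS, vS, out⟩ => simp [decorate] at h
    | Op.lam, ⟨inp, [], vS, out⟩ => simp [decorate] at h
    | Op.mu, ⟨inp, hS, [], out⟩ => simp [decorate] at h
    | Op.push, ⟨x :: inp, hS, vS, out⟩ =>
      simp only [decorate, Option.map_eq_some_iff] at h
      obtain ⟨dw', hdw', rfl⟩ := h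
      obtain ⟨c', h1, h2, h3, h4, h5⟩ := ih _ _ hdw'
      refine ⟨c', by simpa [runOps, stepOp] using h1, by simpa [muLabels] using h2, ?_, ?_, ?_⟩
      · simpa [pushLabels, countOp, List.filter] using h3
      · simpa [countOp, List.filter] using h4
      · rw [h5]; simp only [← Multiset.cons_coe, ← Multiset.singleton_add, ← Multiset.coe_add]
        abel
    | Op.lam, ⟨inp, x :: hS, vS, out⟩ =>
      simp only [decorate, Option.map_eq_some_iff] at h
      obtain ⟨dw', hdw', rfl⟩ := h
      obtain ⟨c', h1, h2, h3, h4, h5⟩ := ih _ _ hdw'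
      refine ⟨c', by simpa [runOps, stepOp] using h1, by simpa [muLabels] using h2, ?_, ?_, ?_⟩
      · simpa [pushLabels, countOp, List.filter] using h3
      · simpa [countOp, List.filter] using h4
      · rw [h5]; simp only [← Multiset.cons_coe, ← Multiset.singleton_add, ← Multiset.coe_add]
        abel
    | Op.mu, ⟨inp, hS, x :: vS, out⟩ =>
      simp only [decorate, Option.map_eq_some_iff] at h
      obtain ⟨dw', hdw', rfl⟩ := h
      obtain ⟨c', h1, h2, h3, h4, h5⟩ := ih _ _ hdw'
      refine ⟨c', by simpa [runOps, stepOp] using h1, ?_, ?_, ?_, ?_⟩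
      · rw [h2]; simp [muLabels]
      · simpa [pushLabels, countOp, List.filter] using h3
      · simpa [countOp, List.filter] using h4
      · rw [h5]; simp only [← Multiset.cons_coe, ← Multiset.singleton_add, ← Multiset.coe_add]
        abel

theorem decorate_append (u : List Op) : ∀ (v : List Op) (c : Conf) (dw : List (Op × ℤ)),
    decorate (u ++ v) c = some dw →
    ∃ du c' dv, decorate u c = some du ∧ runOps u c = some c' ∧
      decorate v c' = some dv ∧ dw = du ++ dv := by
  induction u with
  | nil =>
    intro v c dw h
    exact ⟨[], c, dw, rfl, rfl, h, rfl⟩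
  | cons o u ih =>
    intro v c dw h
    match o, c with
    | Op.push, ⟨[], hS, vS, out⟩ => simp [decorate] at h
    | Op.lam, ⟨inp, [], vS, out⟩ => simp [decorate] at h
    | Op.mu, ⟨inp, hS, [], out⟩ => simp [decorate] at h
    | Op.push, ⟨x :: inp, hS, vS, out⟩ =>
      simp only [List.cons_append, decorate, Option.map_eq_some_iff] at h
      obtain ⟨dw', hdw', rfl⟩ := h
      obtain ⟨du, c', dv, g1, g2, g3, g4⟩ := ih _ _ _ hdw'
      exact ⟨(Op.push, x) :: du, c', dv, by simp [decorate, g1],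
        by simpa [runOps, stepOp] using g2, g3, by simp [g4]⟩
    | Op.lam, ⟨inp, x :: hS, vS, out⟩ =>
      simp only [List.cons_append, decorate, Option.map_eq_some_iff] at h
      obtain ⟨dw', hdw', rfl⟩ := h
      obtain ⟨du, c', dv, g1, g2, g3, g4⟩ := ih _ _ _ hdw'
      exact ⟨(Op.lam, x) :: du, c', dv, by simp [decorate, g1],
        by simpa [runOps, stepOp] using g2, g3, by simp [g4]⟩
    | Op.mu, ⟨inp, hS, x :: vS, out⟩ =>
      simp only [List.cons_append, decorate, Option.map_eq_some_iff] at h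
      obtain ⟨dw', hdw', rfl⟩ := h
      obtain ⟨du, c', dv, g1, g2, g3, g4⟩ := ih _ _ _ hdw'
      exact ⟨(Op.mu, x) :: du, c', dv, by simp [decorate, g1],
        by simpa [runOps, stepOp] using g2, g3, by simp [g4]⟩

theorem split_unique {α : Type*} : ∀ (A A' : List α) {B B' : List α} {e : α},
    A ++ e :: B = A' ++ e :: B' → e ∉ A → e ∉ A' → A = A'
  | [], [], _, _, _, _, _, _ => rfl
  | [], a :: A', B, B', e, h, h1, h2 => by
    simp only [List.nil_append, List.cons_append, List.cons.injEq] at h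
    exact absurd (h.1 ▸ List.mem_cons_self) h2
  | a :: A, [], B, B', e, h, h1, h2 => by
    simp only [List.nil_append, List.cons_append, List.cons.injEq] at h
    exact absurd (h.1 ▸ List.mem_cons_self) h1
  | a :: A, a' :: A', B, B', e, h, h1, h2 => by
    simp only [List.cons_append, List.cons.injEq] at h
    rw [h.1, split_unique A A' h.2 (fun hm => h1 (List.mem_cons_of_mem a hm))
      (fun hm => h2 (List.mem_cons_of_mem a' hm))]

theorem mem_pushLabels {dw : List (Op × ℤ)} {y : ℤ} (h : (Op.push, y) ∈ dw) :
    y ∈ pushLabels dw := by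
  simp only [pushLabels, List.mem_filterMap]
  exact ⟨(Op.push, y), h, by simp⟩

theorem mem_muLabels {dw : List (Op × ℤ)} {y : ℤ} (h : (Op.mu, y) ∈ dw) :
    y ∈ muLabels dw := by
  simp only [muLabels, List.mem_filterMap]
  exact ⟨(Op.mu, y), h, by simp⟩

/-- If a sorting word of `σ` satisfies `(P_i)`, then at time `t_i` (just before the
push of `σ_{k_i}`) the elements currently in the stacks are exactly those of
`σ^{(i)}`. -/
theorem propPi_stacks_at_ti (σ : List ℤ) (hσ : σ.Nodup)
    (w : List Op) (dw : List (Op × ℤ))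
    (hw : SortsTo σ w) (hdw : decorate w (initConf σ) = some dw)
    (i : ℕ) (hi : 1 ≤ i) (hir : i ≤ rtlCount σ)
    (hP : SatisfiesP σ dw i)
    (u v : List Op) (hsplit : w = u ++ Op.push :: v)
    (hcount : countOp u Op.push = rtlPos σ i)
    (s : Conf) (hs : runOps u (initConf σ) = some s) :
    ∀ x : ℤ, (x ∈ s.H ∨ x ∈ s.V) ↔ x ∈ sigmaUp σ i := by
  set k := rtlPos σ i with hkdef
  set m := σ.getD k 0 with hmdef
  -- k < σ.length
  have hlen : i - 1 < (rtlPositions σ).length := by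
    have : rtlCount σ = (rtlPositions σ).length := rfl
    omega
  have hkmem : k ∈ rtlPositions σ := by
    rw [hkdef, rtlPos, List.getD_eq_getElem _ _ hlen]
    exact List.getElem_mem hlen
  have hklt : k < σ.length := by
    have h := hkmem
    simp only [rtlPositions, List.mem_filter, List.mem_range] at h
    exact h.1
  have hm_get : m = σ[k] := List.getD_eq_getElem _ _ hklt
  have hdrop : σ.drop k = m :: σ.drop (k + 1) := by
    rw [hm_get]; exact List.drop_eq_getElem_cons hklt
  have hmσ : m ∈ σ := hm_get ▸ List.getElem_mem hklt
  -- decompose everything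
  obtain ⟨out, hrun, hsort, hpermσ⟩ := hw
  subst hsplit
  obtain ⟨du, s', dv, hdu, hrun_u, hdv, rfl⟩ := decorate_append u _ _ _ hdw
  have hs' : s' = s := by rw [hs] at hrun_u; exact (Option.some.inj hrun_u).symm
  rw [hs'] at hdv
  obtain ⟨s₂, hs₂, hout_u, _, hin_u, hms_u⟩ := decorate_spec u _ _ hdu
  have hs₂s : s₂ = s := by rw [hs] at hs₂; exact (Option.some.inj hs₂).symm
  rw [hs₂s] at hout_u hin_u hms_u
  obtain ⟨sin, sH, sV, sOut⟩ := s
  simp only [initConf, hcount] at hout_u hin_u hms_u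
  -- s.input = σ.drop k
  have hsin : sin = m :: σ.drop (k + 1) := by rw [hin_u, hdrop]
  subst hsin
  -- structure of dv
  simp only [decorate, Option.map_eq_some_iff] at hdv
  obtain ⟨dv', hdv', rfl⟩ := hdv
  -- run of (push :: v) from s gives the final configuration
  obtain ⟨fin, hfin, hout_v, _, _, _⟩ :=
    decorate_spec (Op.push :: v) ⟨m :: σ.drop (k + 1), sH, sV, sOut⟩ _
      (by simp only [decorate, Option.map_eq_some_iff]; exact ⟨dv', hdv', rfl⟩)
  have hfin_eq : fin = ⟨[], [], [], out⟩ := by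
    rw [runOps_append, hs] at hrun
    change runOps (Op.push :: v) ⟨m :: σ.drop (k + 1), sH, sV, sOut⟩ = some ⟨[], [], [], out⟩ at hrun
    rw [hfin] at hrun
    exact Option.some.inj hrun
  have hout_eq : out = sOut ++ muLabels ((Op.push, m) :: dv') := by
    rw [hfin_eq] at hout_v; exact hout_v
  -- multiset equality for the stacks
  have hms : (↑sH + ↑sV + ↑sOut : Multiset ℤ) = ↑(σ.take k) := by
    have h1 : (↑sH + ↑sV + ↑sOut + ↑(σ.drop k) : Multiset ℤ) =
        ↑(σ.take k) + ↑(σ.drop k) := by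
      have h2 : (↑(σ.take k) + ↑(σ.drop k) : Multiset ℤ) = ↑σ := by
        rw [Multiset.coe_add, List.take_append_drop]
      rw [h2]
      simpa [hdrop] using hms_u
    exact add_right_cancel h1
  have hperm2 : (sH ++ sV ++ sOut).Perm (σ.take k) := by
    rw [← Multiset.coe_eq_coe, ← Multiset.coe_add, ← Multiset.coe_add]
    exact hms
  have hndtake : (σ.take k).Nodup := hσ.sublist (List.take_sublist _ _)
  have hnd : (sH ++ sV ++ sOut).Nodup := hperm2.nodup_iff.mpr hndtake
  -- m ∉ σ.take k
  have hmtake : m ∉ σ.take k := by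
    intro hmem
    have hnd2 := hσ
    rw [← List.take_append_drop k σ] at hnd2
    exact (List.nodup_append.mp hnd2).2.2 m hmem m (hdrop ▸ List.mem_cons_self) rfl
  -- sOut ⊆ σ.take k
  have hsub : ∀ x ∈ sOut, x ∈ σ.take k := fun x hx =>
    hperm2.subset (by simp [hx])
  -- m ∈ out, m ∉ sOut
  have hmout : m ∈ out := hpermσ.mem_iff.mpr hmσ
  have hmnot : m ∉ sOut := fun h => hmtake (hsub m h)
  -- every element of sOut is < m
  have hlt : ∀ x ∈ sOut, x < m := by
    intro x hx
    have hmtail : m ∈ muLabels ((Op.push, m) :: dv') := by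
      rcases List.mem_append.mp (hout_eq ▸ hmout) with h | h
      · exact absurd h hmnot
      · exact h
    have hpw := hout_eq ▸ hsort
    exact (List.pairwise_append.mp hpw).2.2 x hx m hmtail
  -- push labels of the full decorated word are nodup
  have hplnd : (pushLabels (du ++ (Op.push, m) :: dv')).Nodup := by
    obtain ⟨_, _, _, hpl, _, _⟩ := decorate_spec (u ++ Op.push :: v) _ _ hdw
    rw [hpl]
    exact hσ.sublist (List.take_sublist _ _)
  -- key: every x ∈ σ with x < m is already in sOut
  have hkey : ∀ x, x ∈ σ → x < m → x ∈ sOut := by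
    intro x hx hxm
    obtain ⟨d1, d2, d3, hB⟩ := hP.2.1 x hx hxm
    have hB' : (d1 ++ (Op.mu, x) :: d2) ++ (Op.push, m) :: d3 =
        du ++ (Op.push, m) :: dv' := by
      rw [← hB]
    have hpm : ∀ (A B : List (Op × ℤ)),
        A ++ (Op.push, m) :: B = du ++ (Op.push, m) :: dv' → (Op.push, m) ∉ A := by
      intro A B hAB hmem
      have hnd3 : (pushLabels (A ++ (Op.push, m) :: B)).Nodup := hAB ▸ hplnd
      simp only [pushLabels, List.filterMap_append, List.filterMap_cons] at hnd3
      have hmA : m ∈ pushLabels A := mem_pushLabels hmem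
      exact (List.nodup_append.mp hnd3).2.2 m hmA m (List.mem_cons_self) rfl
    have hAeq : d1 ++ (Op.mu, x) :: d2 = du :=
      split_unique _ _ hB' (hpm _ _ hB') (hpm _ _ rfl)
    have hxdu : (Op.mu, x) ∈ du := by
      rw [← hAeq]; simp
    have : x ∈ muLabels du := mem_muLabels hxdu
    rw [hout_u]; exact this
  -- conclude
  intro x
  have hxiff : x ∈ sigmaUp σ i ↔ x ∈ σ.take k ∧ m < x := by
    simp only [sigmaUp, ← hkdef, ← hmdef, List.mem_filter, decide_eq_true_eq]
  have hdisj := List.nodup_append.mp hnd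
  constructor
  · intro hx
    have hxmem : x ∈ sH ++ sV ++ sOut := by
      rcases hx with h | h <;> simp [h]
    have hxtake : x ∈ σ.take k := hperm2.subset hxmem
    have hxσ : x ∈ σ := (List.take_sublist _ _).subset hxtake
    have hxnotout : x ∉ sOut := by
      intro hxo
      exact hdisj.2.2 x (by rcases hx with h | h <;> simp [h]) x hxo rfl
    rcases lt_trichotomy x m with h | h | h
    · exact absurd (hkey x hxσ h) hxnotout
    · exact absurd (h ▸ hxtake) hmtake
    · exact hxiff.mpr ⟨hxtake, h⟩
  · intro hx
    obtain ⟨hxtake, hxm⟩ := hxiff.mp hx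
    have hxmem : x ∈ sH ++ sV ++ sOut := hperm2.mem_iff.mpr hxtake
    rcases List.mem_append.mp hxmem with h | h
    · exact List.mem_append.mp h
    · exact absurd (hlt x h) (not_lt.mpr (le_of_lt hxm))
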